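/- Let n ≥ 3 be an integer and for t ≥ 0 set Φ(t) = n ∫₀ᵗ (sinh s)^{n−1} ds. Define H(t) = (sinh t)^{(n−1)(n−2)} + (n(n−2)/(n−1)²)·((sinh t)^{n(n−3)} − Φ(t)^{n−3}) − ((n−1)/n)^{n−2}·Φ(t)^{n−2}. Then H(t) > 0 for all t > 0. -/

import Mathlib

open Real MeasureTheory

-- FTC: ∫₀ᵗ m sinh^{m-1} cosh = sinh^m t
lemma ftc_sinh_pow (m : ℕ) (hm : 1 ≤ m) (t : ℝ) :
    (∫ x in (0:ℝ)..t, (m:ℝ) * Real.sinh x ^ (m-1) * Real.cosh x) = Real.sinh t ^ m := by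
  have h := intervalIntegral.integral_eq_sub_of_hasDerivAt
    (f := fun x => Real.sinh x ^ m) (f' := fun x => (m:ℝ) * Real.sinh x ^ (m-1) * Real.cosh x)
    (fun x _ => (Real.hasDerivAt_sinh x).pow m)
    ((((continuous_const.mul (Real.continuous_sinh.pow (m-1))).mul Real.continuous_cosh)).intervalIntegrable 0 t)
  simpa [Real.sinh_zero, zero_pow (by omega : m ≠ 0)] using h

lemma key1 (n : ℕ) (hn : 3 ≤ n) (t : ℝ) (ht : 0 < t) :
    (n : ℝ) * (∫ x in (0:ℝ)..t, Real.sinh x ^ (n-1)) < Real.sinh t ^ n := by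
  have hftc := ftc_sinh_pow n (by omega) t
  have hint1 : IntervalIntegrable (fun x => (n:ℝ) * Real.sinh x ^ (n-1) * Real.cosh x) volume 0 t :=
    (((continuous_const.mul (Real.continuous_sinh.pow (n-1))).mul Real.continuous_cosh)).intervalIntegrable 0 t
  have hint2 : IntervalIntegrable (fun x => (n:ℝ) * Real.sinh x ^ (n-1)) volume 0 t :=
    ((continuous_const.mul (Real.continuous_sinh.pow (n-1)))).intervalIntegrable 0 t
  have hpos : 0 < ∫ x in (0:ℝ)..t,
      ((n:ℝ) * Real.sinh x ^ (n-1) * Real.cosh x - (n:ℝ) * Real.sinh x ^ (n-1)) := by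
    apply intervalIntegral.intervalIntegral_pos_of_pos_on (hint1.sub hint2) _ ht
    intro x hx
    have hsx : 0 < Real.sinh x := Real.sinh_pos_iff.mpr hx.1
    have hcx : 1 < Real.cosh x := Real.one_lt_cosh.mpr (ne_of_gt hx.1)
    have h1 : 0 < (n:ℝ) * Real.sinh x ^ (n-1) := by positivity
    nlinarith
  rw [intervalIntegral.integral_sub hint1 hint2, hftc,
    intervalIntegral.integral_const_mul] at hpos
  linarith

lemma key2 (n : ℕ) (hn : 3 ≤ n) (t : ℝ) (ht : 0 < t) :
    ((n:ℝ) - 1) * (∫ x in (0:ℝ)..t, Real.sinh x ^ (n-1)) < Real.sinh t ^ (n-1) := by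
  have hftc := ftc_sinh_pow (n-1) (by omega) t
  have he : n - 1 - 1 = n - 2 := by omega
  rw [he] at hftc
  have hint1 : IntervalIntegrable (fun x => ((n-1:ℕ):ℝ) * Real.sinh x ^ (n-2) * Real.cosh x) volume 0 t :=
    (((continuous_const.mul (Real.continuous_sinh.pow (n-2))).mul Real.continuous_cosh)).intervalIntegrable 0 t
  have hint2 : IntervalIntegrable (fun x => ((n-1:ℕ):ℝ) * Real.sinh x ^ (n-1)) volume 0 t :=
    ((continuous_const.mul (Real.continuous_sinh.pow (n-1)))).intervalIntegrable 0 t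
  have hpos : 0 < ∫ x in (0:ℝ)..t,
      (((n-1:ℕ):ℝ) * Real.sinh x ^ (n-2) * Real.cosh x - ((n-1:ℕ):ℝ) * Real.sinh x ^ (n-1)) := by
    apply intervalIntegral.intervalIntegral_pos_of_pos_on (hint1.sub hint2) _ ht
    intro x hx
    have hsx : 0 < Real.sinh x := Real.sinh_pos_iff.mpr hx.1
    have hcx : Real.sinh x < Real.cosh x := Real.sinh_lt_cosh x
    have hcn : (0:ℝ) < ((n-1:ℕ):ℝ) := by
      have : 1 ≤ n - 1 := by omega
      exact_mod_cast Nat.pos_of_ne_zero (by omega)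
    have hsp : 0 < Real.sinh x ^ (n-2) := pow_pos hsx _
    have hee : Real.sinh x ^ (n-1) = Real.sinh x ^ (n-2) * Real.sinh x := by
      rw [← pow_succ]; congr 1; omega
    rw [hee]
    nlinarith [mul_pos (mul_pos hcn hsp) (sub_pos.mpr hcx)]
  rw [intervalIntegral.integral_sub hint1 hint2, hftc,
    intervalIntegral.integral_const_mul] at hpos
  have hc : ((n-1:ℕ):ℝ) = (n:ℝ) - 1 := by
    have : 1 ≤ n := by omega
    push_cast [Nat.cast_sub this]; ring
  rw [hc] at hpos
  linarith

theorem H_pos (n : ℕ) (hn : 3 ≤ n) (Φ : ℝ → ℝ)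
    (hΦ : ∀ t, Φ t = (n : ℝ) * ∫ s in (0:ℝ)..t, Real.sinh s ^ (n - 1)) (t : ℝ) (ht : 0 < t) :
    0 < Real.sinh t ^ ((n - 1) * (n - 2))
      + ((n : ℝ) * (n - 2) / ((n : ℝ) - 1) ^ 2)
        * (Real.sinh t ^ (n * (n - 3)) - Φ t ^ (n - 3))
      - (((n : ℝ) - 1) / n) ^ (n - 2) * Φ t ^ (n - 2) := by
  have hnR : (0:ℝ) < n := by positivity
  have hn1 : (0:ℝ) < (n:ℝ) - 1 := by
    have : (3:ℝ) ≤ n := by exact_mod_cast hn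
    linarith
  have hPval := hΦ t
  set P := (n : ℝ) * ∫ s in (0:ℝ)..t, Real.sinh s ^ (n - 1) with hPdef
  rw [hPval]
  have hPnonneg : 0 ≤ P := by
    rw [hPdef]
    apply mul_nonneg (le_of_lt hnR)
    apply intervalIntegral.integral_nonneg (le_of_lt ht)
    intro x hx
    exact pow_nonneg (Real.sinh_nonneg_iff.mpr hx.1) _
  have hk1 : P < Real.sinh t ^ n := by rw [hPdef]; exact key1 n hn t ht
  have hk2 : (((n:ℝ) - 1) / n) * P < Real.sinh t ^ (n-1) := by
    rw [hPdef]
    have heq : (((n:ℝ) - 1) / n) * ((n:ℝ) * ∫ x in (0:ℝ)..t, Real.sinh x ^ (n-1))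
        = ((n:ℝ) - 1) * ∫ x in (0:ℝ)..t, Real.sinh x ^ (n-1) := by
      field_simp
    rw [heq]
    exact key2 n hn t ht
  have hEA : (((n:ℝ) - 1) / n) ^ (n-2) * P ^ (n-2) < Real.sinh t ^ ((n-1)*(n-2)) := by
    rw [← mul_pow, pow_mul]
    exact pow_lt_pow_left₀ hk2 (mul_nonneg (by positivity) hPnonneg) (by omega)
  have hBC : P ^ (n-3) ≤ Real.sinh t ^ (n*(n-3)) := by
    rw [pow_mul]
    exact pow_le_pow_left₀ hPnonneg hk1.le _
  have hc : 0 ≤ (n : ℝ) * ((n:ℝ) - 2) / ((n : ℝ) - 1) ^ 2 := by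
    have h3 : (3:ℝ) ≤ n := by exact_mod_cast hn
    apply div_nonneg (mul_nonneg (by linarith) (by linarith)) (sq_nonneg _)
  have hmid : 0 ≤ ((n : ℝ) * ((n:ℝ) - 2) / ((n : ℝ) - 1) ^ 2) * (Real.sinh t ^ (n*(n-3)) - P ^ (n-3)) :=
    mul_nonneg hc (sub_nonneg.mpr hBC)
  linarith
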